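/- arXiv:1303.1088 — 2 statements merged into one kernel-verified Lean document; each statement's English description precedes it below -/
import Mathlib

section
/- Behavior of an equivariant holomorphic map at a cusp: Let p : ℍ → ℍ be a holomorphic map and let λ be a nonzero real number such that p(z + 1) = p(z) + λ for all z ∈ ℍ. Then Im(p(z)) tends to infinity as Im(z) tends to infinity; i.e. the function z ↦ Im(p z) tends to atTop along the filter comap Im atTop on ℍ. -/
open UpperHalfPlane Filter Metric Set

/-- A map `p : ℍ → ℍ` is holomorphic if `z ↦ (p z : ℂ)` is complex differentiable
at every point of the (open) upper half-plane. -/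
def IsHolomorphicMap (p : ℍ → ℍ) : Prop :=
  DifferentiableOn ℂ
    (fun z : ℂ => if hz : 0 < z.im then ((p ⟨z, hz⟩ : ℂ)) else 0)
    {z : ℂ | 0 < z.im}

lemma key (p : ℍ → ℍ) (hp : IsHolomorphicMap p) (lam : ℝ)
    (heq : ∀ z : ℍ, p ((1 : ℝ) +ᵥ z) = lam +ᵥ p z) (z : ℍ) (hz : 1 < z.im) :
    |lam| * z.im ≤ |lam| + 2 * (p z).im := by
  set f : ℂ → ℂ := fun w => if hw : 0 < w.im then ((p ⟨w, hw⟩ : ℂ)) else 0 with hf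
  set a : ℂ := (p z : ℂ) with ha
  have ha_im : 0 < a.im := (p z).2
  set g : ℂ → ℂ := fun w => (f w - a) / (f w - (starRingEnd ℂ) a) with hg
  have hball : Metric.ball (z : ℂ) z.im ⊆ {w : ℂ | 0 < w.im} := by
    intro w hw
    simp only [Metric.mem_ball, Complex.dist_eq] at hw
    have h1 : |(w - z).im| ≤ ‖w - z‖ := Complex.abs_im_le_norm _
    simp only [Set.mem_setOf_eq]
    have him : (w - (z:ℂ)).im = w.im - z.im := by simp [Complex.sub_im]
    rw [him] at h1
    have := abs_le.1 h1
    linarith [this.1]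
  have hfim : ∀ w ∈ Metric.ball (z : ℂ) z.im, 0 < (f w).im := by
    intro w hw
    have hw' := hball hw
    simp only [Set.mem_setOf_eq] at hw'
    simp only [hf, dif_pos hw']
    exact (p ⟨w, hw'⟩).2
  have hden : ∀ w ∈ Metric.ball (z : ℂ) z.im, f w - (starRingEnd ℂ) a ≠ 0 := by
    intro w hw h0
    have := hfim w hw
    rw [sub_eq_zero] at h0
    rw [h0] at this
    simp only [Complex.conj_im] at this
    linarith
  have hd : DifferentiableOn ℂ g (Metric.ball (z : ℂ) z.im) := by
    apply DifferentiableOn.div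
    · exact (hp.mono hball).sub (differentiableOn_const _)
    · exact (hp.mono hball).sub (differentiableOn_const _)
    · exact hden
  have hfz : f (z : ℂ) = a := by
    rw [hf]
    exact dif_pos z.2
  have hgz : g z = 0 := by simp [hg, hfz]
  have habs : ∀ w ∈ Metric.ball (z : ℂ) z.im,
      ‖f w - a‖ < ‖f w - (starRingEnd ℂ) a‖ := by
    intro w hw
    have hu := hfim w hw
    set u := f w with hu'
    have h1 : ‖u - a‖ ^ 2 = (u.re - a.re)^2 + (u.im - a.im)^2 := by
      rw [Complex.sq_norm, Complex.normSq_apply]; simp [Complex.sub_re, Complex.sub_im]; ring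
    have h2 : ‖u - (starRingEnd ℂ) a‖ ^ 2 = (u.re - a.re)^2 + (u.im + a.im)^2 := by
      rw [Complex.sq_norm, Complex.normSq_apply]; simp [Complex.sub_re, Complex.sub_im]; ring
    have hsq : ‖u - a‖ ^ 2 < ‖u - (starRingEnd ℂ) a‖ ^ 2 := by
      rw [h1, h2]; nlinarith
    nlinarith [norm_nonneg (u - a), norm_nonneg (u - (starRingEnd ℂ) a)]
  have hmaps : Set.MapsTo g (Metric.ball (z : ℂ) z.im) (Metric.ball (g z) 1) := by
    intro w hw
    rw [hgz, Metric.mem_ball, dist_zero_right, hg]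
    simp only [norm_div]
    rw [div_lt_one (norm_pos_iff.mpr (hden w hw))]
    exact habs w hw
  -- apply Schwarz at z + 1
  have hmem : (z : ℂ) + 1 ∈ Metric.ball (z : ℂ) z.im := by
    simp only [Metric.mem_ball, Complex.dist_eq, add_sub_cancel_left, norm_one]
    exact hz
  have hsch := Complex.dist_le_div_mul_dist_of_mapsTo_ball hd (hmaps.mono_right Metric.ball_subset_closedBall) hmem
  -- compute g (z + 1)
  have him1 : (0:ℝ) < ((z:ℂ) + 1).im := by simp [z.2.le]; exact z.2
  have hzeq : (⟨(z:ℂ) + 1, him1⟩ : ℍ) = (1 : ℝ) +ᵥ z := by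
    apply UpperHalfPlane.ext
    rw [UpperHalfPlane.coe_vadd, UpperHalfPlane.coe_mk_subtype]
    push_cast
    ring
  have hf1 : f ((z:ℂ) + 1) = (lam : ℂ) + a := by
    simp only [hf, dif_pos him1]
    rw [hzeq, heq z, UpperHalfPlane.coe_vadd, ha]
  set d : ℂ := (lam : ℂ) + a - (starRingEnd ℂ) a with hdd
  have hg1 : g ((z:ℂ) + 1) = (lam : ℂ) / d := by
    rw [hg]; simp only [hf1, hdd]; ring_nf
  have hdabs : ‖d‖ ≤ |lam| + 2 * a.im := by
    have h1 : d = (lam : ℂ) + (a - (starRingEnd ℂ) a) := by rw [hdd]; ring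
    rw [h1]
    refine le_trans (norm_add_le _ _) ?_
    have h2 : a - (starRingEnd ℂ) a = (2 * a.im : ℝ) * Complex.I := by
      rw [Complex.sub_conj]
    rw [h2]
    simp only [norm_mul, Complex.norm_real, Complex.norm_I, mul_one, Real.norm_eq_abs]
    rw [abs_of_pos (by norm_num : (0:ℝ) < 2), abs_of_pos ha_im]
  have hdpos : 0 < ‖d‖ := by
    apply norm_pos_iff.mpr
    intro h0
    have : d.im = 0 := by rw [h0]; rfl
    simp [hdd, Complex.add_im, Complex.sub_im, Complex.conj_im] at this
    linarith
  -- dist (g (z+1)) (g z) = |lam| / abs d ≤ 1 / z.im * 1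
  rw [hgz, hg1, dist_zero_right, norm_div, Complex.norm_real, Real.norm_eq_abs] at hsch
  have hdist1 : dist ((z:ℂ) + 1) (z:ℂ) = 1 := by
    simp [Complex.dist_eq]
  rw [hdist1, mul_one] at hsch
  have hzpos : (0:ℝ) < z.im := z.2
  have : |lam| * z.im ≤ ‖d‖ := by
    rw [div_le_div_iff₀ hdpos hzpos] at hsch
    linarith
  calc |lam| * z.im ≤ ‖d‖ := this
    _ ≤ |lam| + 2 * (p z).im := hdabs

/-- **Behavior of an equivariant holomorphic map at a cusp**: if `p : ℍ → ℍ` is holomorphic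
and `p (z + 1) = p z + λ` for some nonzero real `λ`, then `Im (p z) → ∞` as `Im z → ∞`. -/
theorem im_tendsto_atTop_of_holomorphic_translation_equivariant
    (p : ℍ → ℍ) (hp : IsHolomorphicMap p) (lam : ℝ) (hlam : lam ≠ 0)
    (heq : ∀ z : ℍ, p ((1 : ℝ) +ᵥ z) = lam +ᵥ p z) :
    Tendsto (fun z : ℍ => (p z).im) (comap UpperHalfPlane.im atTop) atTop := by
  have hl : 0 < |lam| := abs_pos.2 hlam
  rw [Filter.tendsto_atTop]
  intro b
  have hmem : {w : ℝ | max 2 ((2 * b + |lam|) / |lam|) ≤ w} ∈ (atTop : Filter ℝ) :=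
    eventually_ge_atTop _
  filter_upwards [preimage_mem_comap hmem] with z hzc
  simp only [Set.mem_preimage, Set.mem_setOf_eq, max_le_iff] at hzc
  have hz2 : (2:ℝ) ≤ z.im := hzc.1
  have hz3 : (2 * b + |lam|) / |lam| ≤ z.im := hzc.2
  have hkey := key p hp lam heq z (by linarith)
  have h4 : 2 * b + |lam| ≤ |lam| * z.im := by
    rw [div_le_iff₀ hl] at hz3; linarith
  linarith
end

section
/- The semiconjugacy group of a nonconstant holomorphic self-map of ℍ is a closed subgroup: Let p : ℍ → ℍ be a nonconstant holomorphic map. Then the set G_p = {h ∈ SL(2,ℝ) : ∃ g ∈ SL(2,ℝ), ∀ z ∈ ℍ, p(h • z) = g • p(z)} is a subgroup of SL(2,ℝ) and is closed in the topology of SL(2,ℝ). -/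
open UpperHalfPlane Matrix

local notation "SL2R" => Matrix.SpecialLinearGroup (Fin 2) ℝ

noncomputable instance : TopologicalSpace SL2R := instTopologicalSpaceSubtype

theorem smul_coe' (g : SL2R) (z : ℍ) : ((g • z : ℍ) : ℂ) =
    ((g 0 0 : ℂ) * z + g 0 1) / ((g 1 0 : ℂ) * z + g 1 1) := by
  rw [specialLinearGroup_apply]; simp

theorem denom_ne_zero' (g : SL2R) (z : ℍ) : ((g 1 0 : ℂ) * z + g 1 1) ≠ 0 := by
  intro h
  have him : (g 1 0 : ℝ) * z.im = 0 := by
    have := congrArg Complex.im h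
    simpa using this
  have hc : (g 1 0 : ℝ) = 0 := by
    rcases mul_eq_zero.1 him with h' | h'
    · exact h'
    · exact absurd h' z.im_pos.ne'
  have hd : (g 1 1 : ℝ) = 0 := by
    have := congrArg Complex.re h
    simpa [hc] using this
  have hdet : (g : Matrix (Fin 2) (Fin 2) ℝ).det = 1 := g.2
  rw [Matrix.det_fin_two] at hdet
  simp [hc, hd] at hdet

theorem im_identity (g : SL2R) (z : ℍ) :
    (g • z).im * Complex.normSq ((g 1 0 : ℂ) * z + g 1 1) = z.im := by
  have h := smul_coe' g z
  have hd := denom_ne_zero' g z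
  have him : (g • z).im = (((g 0 0 : ℂ) * z + g 0 1) / ((g 1 0 : ℂ) * z + g 1 1)).im := by
    rw [← h]; rfl
  rw [him, Complex.div_im]
  have hdet : (g 0 0 : ℝ) * g 1 1 - g 0 1 * g 1 0 = 1 := by
    have := g.2; rw [Matrix.det_fin_two] at this; exact this
  have hns : Complex.normSq ((g 1 0 : ℂ) * z + g 1 1) ≠ 0 := by
    simpa [Complex.normSq_eq_zero] using hd
  rw [sub_mul, div_mul_cancel₀ _ hns, div_mul_cancel₀ _ hns]
  simp only [Complex.add_im, Complex.add_re, Complex.mul_im, Complex.mul_re,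
    Complex.ofReal_re, Complex.ofReal_im, UpperHalfPlane.coe_im, UpperHalfPlane.coe_re]
  linear_combination (z.im : ℝ) * hdet

theorem continuous_smul_pt (z : ℍ) : Continuous fun g : SL2R => g • z := by
  have hcoe : Continuous fun g : SL2R => ((g • z : ℍ) : ℂ) := by
    have hent : ∀ i j, Continuous fun g : SL2R => ((g i j : ℝ) : ℂ) := by
      intro i j
      have h1 : Continuous fun g : SL2R => (g : Matrix (Fin 2) (Fin 2) ℝ) :=
        continuous_subtype_val
      have h2 : Continuous fun g : SL2R => (g : Matrix (Fin 2) (Fin 2) ℝ) i j :=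
        (((continuous_apply (A := fun _ : Fin 2 => ℝ) j).comp
          (continuous_apply (A := fun _ : Fin 2 => Fin 2 → ℝ) i)).comp h1 : _)
      exact Complex.continuous_ofReal.comp h2
    have : (fun g : SL2R => ((g • z : ℍ) : ℂ)) =
        fun g => ((g 0 0 : ℂ) * z + g 0 1) / ((g 1 0 : ℂ) * z + g 1 1) := by
      funext g; exact smul_coe' g z
    rw [this]
    exact (((hent 0 0).mul continuous_const).add (hent 0 1)).div
      (((hent 1 0).mul continuous_const).add (hent 1 1))
      (fun g => denom_ne_zero' g z)
  exact isEmbedding_coe.continuous_iff.mpr hcoe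

theorem isCompact_stab (w₀ : ℍ) (C : ℝ) :
    IsCompact {g : SL2R | dist (g • w₀) w₀ ≤ C} := by
  set E := Real.exp C with hE
  set s := Real.sqrt E with hs
  have hE0 : 0 < E := Real.exp_pos C
  have hs0 : 0 ≤ s := Real.sqrt_nonneg _
  set y := w₀.im with hy'
  set x := w₀.re with hx'
  have hy : 0 < y := w₀.im_pos
  set M := ‖(w₀ : ℂ)‖ + y * (E - 1) with hM
  set R : ℝ := max (max (M * s / y) (M * s + M * s / y * |x|))
      (max (s / y) (s + s / y * |x|)) with hR
  set K := {g : SL2R | dist (g • w₀) w₀ ≤ C} with hK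
  set T : Set (Matrix (Fin 2) (Fin 2) ℝ) :=
    Set.univ.pi fun _ : Fin 2 => Set.univ.pi fun _ : Fin 2 => Set.Icc (-R) R with hT'
  have hT : IsCompact T :=
    isCompact_univ_pi fun _ => isCompact_univ_pi fun _ => isCompact_Icc
  -- entrywise bounds for members of K
  have hbound : ∀ g ∈ K, ∀ i j, |(g : Matrix (Fin 2) (Fin 2) ℝ) i j| ≤ R := by
    intro g hg i j
    set w := g • w₀ with hw
    have hdC : dist w w₀ ≤ C := hg
    have hexp : Real.exp (dist w₀ w) ≤ E := by
      rw [dist_comm] at hdC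
      exact Real.exp_le_exp.2 hdC
    have him1 : y ≤ w.im * E := by
      calc y ≤ w.im * Real.exp (dist w₀ w) := im_le_im_mul_exp_dist w₀ w
        _ ≤ w.im * E := by
          exact mul_le_mul_of_nonneg_left hexp (le_of_lt w.im_pos)
    set D : ℂ := (g 1 0 : ℂ) * w₀ + g 1 1 with hD
    set N : ℂ := (g 0 0 : ℂ) * w₀ + g 0 1 with hN
    have hid : w.im * Complex.normSq D = y := im_identity g w₀
    have hDns : Complex.normSq D ≤ E := by
      have := him1
      rw [← hid] at this
      exact le_of_mul_le_mul_left this w.im_pos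
    have hDabs : ‖D‖ ≤ s := by
      rw [Complex.norm_def]
      exact Real.sqrt_le_sqrt hDns
    have hwabs : ‖(w : ℂ)‖ ≤ M := by
      have h1 : dist (w : ℂ) (w₀ : ℂ) ≤ y * (E - 1) := by
        calc dist (w : ℂ) (w₀ : ℂ) ≤ y * (Real.exp (dist w w₀) - 1) := dist_coe_le w w₀
          _ ≤ y * (E - 1) := by
            have : Real.exp (dist w w₀) ≤ E := Real.exp_le_exp.2 hdC
            nlinarith
      have h2 : ‖(w : ℂ) - w₀‖ = dist (w : ℂ) w₀ := (Complex.dist_eq _ _).symm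
      have h3 : ‖(w : ℂ)‖ ≤ ‖(w : ℂ) - w₀‖ + ‖(w₀ : ℂ)‖ := by
        simpa using norm_add_le ((w : ℂ) - w₀) (w₀ : ℂ)
      rw [hM]
      linarith
    have hND : N = (w : ℂ) * D := by
      have h := smul_coe' g w₀
      rw [← hw] at h
      rw [h, div_mul_cancel₀ _ (denom_ne_zero' g w₀)]
    have hNabs : ‖N‖ ≤ M * s := by
      rw [hND, norm_mul]
      exact mul_le_mul hwabs hDabs (norm_nonneg _) (le_trans (norm_nonneg _) hwabs)
    -- real/imag parts
    have hDim : D.im = g 1 0 * y := by simp [hD, UpperHalfPlane.coe_im, hy']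
    have hDre : D.re = g 1 0 * x + g 1 1 := by simp [hD, UpperHalfPlane.coe_re, hx']
    have hNim : N.im = g 0 0 * y := by simp [hN, UpperHalfPlane.coe_im, hy']
    have hNre : N.re = g 0 0 * x + g 0 1 := by simp [hN, UpperHalfPlane.coe_re, hx']
    have habs_im_D : |D.im| ≤ s := le_trans (Complex.abs_im_le_norm D) hDabs
    have habs_re_D : |D.re| ≤ s := le_trans (Complex.abs_re_le_norm D) hDabs
    have habs_im_N : |N.im| ≤ M * s := le_trans (Complex.abs_im_le_norm N) hNabs
    have habs_re_N : |N.re| ≤ M * s := le_trans (Complex.abs_re_le_norm N) hNabs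
    have hc : |(g : Matrix (Fin 2) (Fin 2) ℝ) 1 0| ≤ s / y := by
      rw [le_div_iff₀ hy]
      calc |(g : Matrix (Fin 2) (Fin 2) ℝ) 1 0| * y = |g 1 0 * y| := by
            rw [abs_mul, abs_of_pos hy]
        _ ≤ s := by rw [← hDim]; exact habs_im_D
    have ha : |(g : Matrix (Fin 2) (Fin 2) ℝ) 0 0| ≤ M * s / y := by
      rw [le_div_iff₀ hy]
      calc |(g : Matrix (Fin 2) (Fin 2) ℝ) 0 0| * y = |g 0 0 * y| := by
            rw [abs_mul, abs_of_pos hy]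
        _ ≤ M * s := by rw [← hNim]; exact habs_im_N
    have hd' : |(g : Matrix (Fin 2) (Fin 2) ℝ) 1 1| ≤ s + s / y * |x| := by
      have : (g : Matrix (Fin 2) (Fin 2) ℝ) 1 1 = D.re - g 1 0 * x := by rw [hDre]; ring
      rw [this]
      calc |D.re - g 1 0 * x| ≤ |D.re| + |g 1 0 * x| := abs_sub _ _
        _ ≤ s + s / y * |x| := by
            rw [abs_mul]
            exact add_le_add habs_re_D (mul_le_mul_of_nonneg_right hc (abs_nonneg x))
    have hb : |(g : Matrix (Fin 2) (Fin 2) ℝ) 0 1| ≤ M * s + M * s / y * |x| := by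
      have : (g : Matrix (Fin 2) (Fin 2) ℝ) 0 1 = N.re - g 0 0 * x := by rw [hNre]; ring
      rw [this]
      calc |N.re - g 0 0 * x| ≤ |N.re| + |g 0 0 * x| := abs_sub _ _
        _ ≤ M * s + M * s / y * |x| := by
            rw [abs_mul]
            exact add_le_add habs_re_N (mul_le_mul_of_nonneg_right ha (abs_nonneg x))
    fin_cases i <;> fin_cases j
    · exact le_trans ha (le_trans (le_max_left _ _) (le_max_left _ _))
    · exact le_trans hb (le_trans (le_max_right _ _) (le_max_left _ _))
    · exact le_trans hc (le_trans (le_max_left _ _) (le_max_right _ _))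
    · exact le_trans hd' (le_trans (le_max_right _ _) (le_max_right _ _))
  -- K is closed in SL2R
  have hKclosed : IsClosed K := by
    have hcont : Continuous fun g : SL2R => dist (g • w₀) w₀ :=
      (continuous_smul_pt w₀).dist continuous_const
    exact isClosed_Iic.preimage hcont
  -- image of K under coercion is closed
  have hSLclosed : IsClosed {A : Matrix (Fin 2) (Fin 2) ℝ | A.det = 1} :=
    isClosed_eq continuous_id.matrix_det continuous_const
  have hemb : Topology.IsClosedEmbedding (Subtype.val : SL2R → Matrix (Fin 2) (Fin 2) ℝ) :=
    hSLclosed.isClosedEmbedding_subtypeVal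
  have himg_closed : IsClosed (Subtype.val '' K) := hemb.isClosedMap _ hKclosed
  have hsub : Subtype.val '' K ⊆ T := by
    rintro A ⟨g, hg, rfl⟩
    intro i _
    intro j _
    exact abs_le.1 (hbound g hg i j)
  exact Subtype.isCompact_iff.2 (hT.of_isClosed_subset himg_closed hsub)

instance : FirstCountableTopology (Matrix (Fin 2) (Fin 2) ℝ) :=
  inferInstanceAs (FirstCountableTopology (Fin 2 → Fin 2 → ℝ))

noncomputable instance : FirstCountableTopology SL2R :=
  inferInstanceAs (FirstCountableTopology
    {A : Matrix (Fin 2) (Fin 2) ℝ // A ∈ {B : Matrix (Fin 2) (Fin 2) ℝ | B.det = 1}})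

noncomputable instance : SequentialSpace SL2R :=
  FrechetUrysohnSpace.to_sequentialSpace

theorem continuous_of_holomorphic (p : ℍ → ℍ) (hp : IsHolomorphicMap p) : Continuous p := by
  have hopen : IsOpen {z : ℂ | 0 < z.im} := isOpen_lt continuous_const Complex.continuous_im
  set F : ℂ → ℂ := fun z : ℂ => if hz : 0 < z.im then ((p ⟨z, hz⟩ : ℂ)) else 0 with hF
  have hFc : Continuous fun z : ℍ => F (z : ℂ) := by
    rw [continuous_iff_continuousAt]
    intro z
    have h1 : ContinuousAt F (z : ℂ) :=
      (hp.continuousOn.continuousAt (hopen.mem_nhds z.2))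
    exact h1.comp continuous_coe.continuousAt
  have heq : (fun z : ℍ => ((p z : ℍ) : ℂ)) = fun z : ℍ => F (z : ℂ) := by
    funext z
    show (p z : ℂ) = if hz : 0 < (z : ℂ).im then ((p ⟨(z : ℂ), hz⟩ : ℍ) : ℂ) else 0
    split_ifs with h
    · rfl
    · exact absurd z.2 h
  have h2 : Continuous fun z : ℍ => ((p z : ℍ) : ℂ) := heq ▸ hFc
  exact isEmbedding_coe.continuous_iff.mpr h2

/-- **The semiconjugacy group of a nonconstant holomorphic self-map of `ℍ` is a closed
subgroup**: for a nonconstant holomorphic `p : ℍ → ℍ`, the set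
`G_p = {h : ∃ g, ∀ z, p (h • z) = g • p z}` is a subgroup of `SL(2,ℝ)` and is closed. -/
theorem semiconjugacy_group_isClosed_subgroup
    (p : ℍ → ℍ) (hp : IsHolomorphicMap p) (hnc : ∃ z₁ z₂ : ℍ, p z₁ ≠ p z₂) :
    ∃ S : Subgroup SL2R,
      (S : Set SL2R) = {h : SL2R | ∃ g : SL2R, ∀ z : ℍ, p (h • z) = g • p z} ∧
      IsClosed (S : Set SL2R) := by
  refine ⟨{ carrier := {h : SL2R | ∃ g : SL2R, ∀ z : ℍ, p (h • z) = g • p z}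
            one_mem' := ⟨1, fun z => by simp⟩
            mul_mem' := by
              rintro a b ⟨ga, hga⟩ ⟨gb, hgb⟩
              exact ⟨ga * gb, fun z => by rw [mul_smul, hga, hgb, mul_smul]⟩
            inv_mem' := by
              rintro a ⟨g, hg⟩
              refine ⟨g⁻¹, fun z => ?_⟩
              have h1 := hg (a⁻¹ • z)
              rw [smul_inv_smul] at h1
              rw [h1, inv_smul_smul] }, rfl, ?_⟩
  have hcp : Continuous p := continuous_of_holomorphic p hp
  refine IsSeqClosed.isClosed ?_
  intro u h hu hlim
  obtain ⟨z₀, _, _⟩ := hnc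
  set w₀ := p z₀ with hw₀
  choose gs hgs using hu
  have hconv0 : Filter.Tendsto (fun n => p (u n • z₀)) Filter.atTop (nhds (p (h • z₀))) := by
    exact ((hcp.tendsto _).comp ((continuous_smul_pt z₀).tendsto h)).comp hlim
  obtain ⟨C, hC⟩ := (Metric.isBounded_range_of_tendsto _ hconv0).subset_closedBall w₀
  have hK : ∀ n, gs n ∈ {g : SL2R | dist (g • w₀) w₀ ≤ C} := by
    intro n
    have : gs n • w₀ = p (u n • z₀) := (hgs n z₀).symm
    rw [Set.mem_setOf_eq, this]
    exact hC ⟨n, rfl⟩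
  obtain ⟨g, -, φ, hφ, hgconv⟩ := (isCompact_stab w₀ C).tendsto_subseq hK
  refine ⟨g, fun z => ?_⟩
  have t2 : Filter.Tendsto (fun n => p (u (φ n) • z)) Filter.atTop (nhds (p (h • z))) :=
    (((hcp.tendsto _).comp ((continuous_smul_pt z).tendsto h)).comp hlim).comp
      hφ.tendsto_atTop
  have t4 : Filter.Tendsto (fun n => gs (φ n) • p z) Filter.atTop (nhds (g • p z)) :=
    ((continuous_smul_pt (p z)).tendsto g).comp hgconv
  have t3 : (fun n => p (u (φ n) • z)) = fun n => gs (φ n) • p z := by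
    funext n; exact hgs (φ n) z
  rw [t3] at t2
  exact tendsto_nhds_unique t2 t4
end
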